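/- Let τ be the Thue–Morse word over {0,1} and let ψ be the morphism ψ(0) = 10, ψ(1) = 11 applied letter by letter to τ. Then the infinite word ψ(τ) contains no parameterized cube of length greater than 3: there is no fragment u₁u₂u₃ of ψ(τ) with |u₁| = |u₂| = |u₃| = k ≥ 2 such that both u₁u₂ and u₂u₃ are parameterized squares. -/

import Mathlib

/-- Words `u` and `v` are parameterized-equivalent if `|u| = |v|` and there is a bijection
`f : Alph(u) → Alph(v)` with `v[i] = f(u[i])` for all `i`; equivalently, `v = u.map f` for
some function `f` injective on the set of letters of `u`. -/
def ParamEquiv {α : Type*} (u v : List α) : Prop :=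
  ∃ f : α → α, Set.InjOn f {a | a ∈ u} ∧ v = u.map f

open Fin.NatCast in
/-- The Thue–Morse word: its `n`-th letter (`n ≥ 0`) is the parity of the number of ones in
the binary expansion of `n`. -/
def thueMorse (n : ℕ) : Fin 2 :=
  (((Nat.digits 2 n).count 1 : ℕ) : Fin 2)

/-- The infinite word `ψ(τ)`, where `τ` is the Thue–Morse word and `ψ` is the morphism
`0 ↦ 10, 1 ↦ 11` applied letter by letter: position `2n` carries the letter `1` and
position `2n+1` carries `τ(n)`. -/
def psiThueMorse (n : ℕ) : Fin 2 :=
  if n % 2 = 0 then 1 else thueMorse (n / 2)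

lemma tm_even (n : ℕ) : thueMorse (2*n) = thueMorse n := by
  rcases Nat.eq_zero_or_pos n with h|h
  · subst h; rfl
  · unfold thueMorse
    rw [Nat.digits_def' (by norm_num : 2 ≤ 2) (by omega)]
    simp [Nat.mul_div_cancel_left, Nat.mul_mod_right, List.count_cons]

lemma tm_odd (n : ℕ) : thueMorse (2*n+1) = thueMorse n + 1 := by
  unfold thueMorse
  rw [Nat.digits_def' (by norm_num : 2 ≤ 2) (by omega)]
  have h1 : (2*n+1) % 2 = 1 := by omega
  have h2 : (2*n+1) / 2 = n := by omega
  rw [h1, h2]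
  simp [List.count_cons]
  apply Fin.ext; simp [Fin.val_add, Fin.val_natCast]

lemma tm_pair (n : ℕ) : thueMorse (2*n) ≠ thueMorse (2*n+1) := by
  rw [tm_even, tm_odd]
  have : ∀ a : Fin 2, a ≠ a + 1 := by decide
  exact this _

lemma no3 (n : ℕ) :
    ¬(thueMorse n = thueMorse (n+1) ∧ thueMorse (n+1) = thueMorse (n+2)) := by
  rintro ⟨h1, h2⟩
  rcases Nat.even_or_odd n with ⟨s, hs⟩ | ⟨s, hs⟩
  · have e : n = 2*s := by omega
    rw [e] at h1
    exact tm_pair s h1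
  · have e1 : n+1 = 2*(s+1) := by omega
    have e2 : n+2 = 2*(s+1)+1 := by omega
    rw [e1, e2] at h2
    exact tm_pair (s+1) h2

lemma noPeriod : ∀ m, 0 < m → ∀ a,
    ¬(∀ t, a ≤ t → t < a + 2*m → thueMorse t = thueMorse (t+m)) := by
  intro m
  induction m using Nat.strong_induction_on with
  | _ m ih =>
    intro hm a H
    rcases Nat.even_or_odd m with ⟨m', hm'⟩ | ⟨r, hr⟩
    · have hmm : m = 2*m' := by omega
      have hm'pos : 0 < m' := by omega
      apply ih m' (by omega) hm'pos ((a+1)/2)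
      intro s hs1 hs2
      have := H (2*s) (by omega) (by omega)
      rw [show 2*s+m = 2*(s+m') by omega, tm_even, tm_even] at this
      exact this
    · subst hr
      rcases Nat.eq_zero_or_pos r with h0 | hr1
      · subst h0
        have e1 := H a (le_refl a) (by omega)
        have e2 := H (a+1) (by omega) (by omega)
        exact no3 a ⟨by simpa using e1, by rw [show a+2 = a+1+1 by omega]; simpa using e2⟩
      · have hE : ∀ s, a ≤ 2*s → 2*s < a + 2*(2*r+1) →
            thueMorse s = thueMorse (s+r) + 1 := by
          intro s h1 h2
          have := H (2*s) h1 h2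
          rw [show 2*s+(2*r+1) = 2*(s+r)+1 by omega, tm_even, tm_odd] at this
          exact this
        have hO : ∀ s, a ≤ 2*s+1 → 2*s+1 < a + 2*(2*r+1) →
            thueMorse (s+r+1) = thueMorse s + 1 := by
          intro s h1 h2
          have := H (2*s+1) h1 h2
          rw [tm_odd, show 2*s+1+(2*r+1) = 2*(s+r+1) by omega, tm_even] at this
          exact this.symm
        set s := (a+1)/2 with hs
        have e1 := hE s (by omega) (by omega)
        have e2 := hE (s+1) (by omega) (by omega)
        have f1 := hO s (by omega) (by omega)
        have f2 := hO (s+1) (by omega) (by omega)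
        apply no3 (s+r)
        have key : ∀ x : Fin 2, x = x + 1 + 1 := by decide
        constructor
        · rw [f1, e1]; exact key _
        · rw [show s+r+1+1 = s+1+r+1 by omega, f2, show s+r+1 = s+1+r by omega, e2]
          exact key _

lemma psi_even (q : ℕ) (h : q % 2 = 0) : psiThueMorse q = 1 := by
  simp [psiThueMorse, h]

lemma psi_odd (q : ℕ) (h : q % 2 = 1) : psiThueMorse q = thueMorse (q/2) := by
  simp [psiThueMorse, h]

lemma paramEquiv_shift {u v : List (Fin 2)} (h : ParamEquiv u v) :
    ∃ c : Fin 2, v = u.map (· + c) := by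
  obtain ⟨f, hinj, rfl⟩ := h
  by_cases h0 : (0 : Fin 2) ∈ u
  · refine ⟨f 0, List.map_congr_left ?_⟩
    intro a ha
    fin_cases a
    · show f 0 = 0 + f 0; rw [zero_add]
    · have hne : f 0 ≠ f 1 := by
        intro he
        have := hinj h0 ha he
        simp at this
      show f 1 = 1 + f 0
      revert hne
      have : ∀ x y : Fin 2, x ≠ y → y = 1 + x := by decide
      exact this _ _
  · refine ⟨f 1 + 1, List.map_congr_left ?_⟩
    intro a ha
    fin_cases a
    · exact absurd ha h0
    · show f 1 = 1 + (f 1 + 1)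
      have : ∀ x : Fin 2, x = 1 + (x + 1) := by decide
      exact this _

/-- The word `ψ(τ)` contains no parameterized cube of length greater than 3: there is no
fragment `u₁ ++ u₂ ++ u₃` of `ψ(τ)` with `|u₁| = |u₂| = |u₃| = k ≥ 2` such that both
`u₁u₂` and `u₂u₃` are parameterized squares. -/
theorem psiThueMorse_avoids_nontrivial_param_cubes :
    ¬∃ (i k : ℕ) (u₁ u₂ u₃ : List (Fin 2)), 2 ≤ k ∧
      (List.range (3 * k)).map (fun t => psiThueMorse (i + t)) = u₁ ++ u₂ ++ u₃ ∧
      u₁.length = k ∧ u₂.length = k ∧ u₃.length = k ∧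
      ParamEquiv u₁ u₂ ∧ ParamEquiv u₂ u₃ := by
  rintro ⟨i, k, u₁, u₂, u₃, hk, heq, h1, h2, h3, p12, p23⟩
  obtain ⟨c₁, hc₁⟩ := paramEquiv_shift p12
  obtain ⟨c₂, hc₂⟩ := paramEquiv_shift p23
  set g : ℕ → Fin 2 := fun t => psiThueMorse (i + t) with hg
  have hq : ∀ t, t < 3*k → (u₁ ++ u₂ ++ u₃)[t]? = some (g t) := by
    intro t ht
    rw [← heq]
    simp [List.getElem?_map, List.getElem?_range, ht]
  have val1 : ∀ j, j < k → u₁[j]? = some (g j) := by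
    intro j hj
    have := hq j (by omega)
    rwa [List.getElem?_append_left (by simp [h1, h2]; omega),
      List.getElem?_append_left (by omega)] at this
  have val2 : ∀ j, j < k → u₂[j]? = some (g (k+j)) := by
    intro j hj
    have := hq (k+j) (by omega)
    rwa [List.getElem?_append_left (by simp [h1, h2]; omega),
      List.getElem?_append_right (by omega), h1,
      show k + j - k = j by omega] at this
  have val3 : ∀ j, j < k → u₃[j]? = some (g (2*k+j)) := by
    intro j hj
    have := hq (2*k+j) (by omega)
    rwa [List.getElem?_append_right (by simp [h1, h2]; omega),
      show (u₁ ++ u₂).length = k + k by simp [h1, h2],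
      show 2*k + j - (k+k) = j by omega] at this
  have R1 : ∀ j, j < k → g (k+j) = g j + c₁ := by
    intro j hj
    have hv2 := val2 j hj
    rw [hc₁, List.getElem?_map, val1 j hj] at hv2
    simpa using hv2.symm
  have R2 : ∀ j, j < k → g (2*k+j) = g (k+j) + c₂ := by
    intro j hj
    have hv3 := val3 j hj
    rw [hc₂, List.getElem?_map, val2 j hj] at hv3
    simpa using hv3.symm
  -- translate to statements about psiThueMorse on absolute positions
  have S1 : ∀ p, i ≤ p → p < i + k → psiThueMorse (p+k) = psiThueMorse p + c₁ := by
    intro p hp1 hp2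
    have := R1 (p-i) (by omega)
    rw [hg] at this
    simp only at this
    rwa [show i + (k + (p-i)) = p + k by omega, show i + (p-i) = p by omega] at this
  have S2 : ∀ p, i + k ≤ p → p < i + 2*k → psiThueMorse (p+k) = psiThueMorse p + c₂ := by
    intro p hp1 hp2
    have := R2 (p-i-k) (by omega)
    rw [hg] at this
    simp only at this
    rwa [show i + (2*k + (p-i-k)) = p + k by omega,
      show i + (k + (p-i-k)) = p by omega] at this
  rcases Nat.even_or_odd k with ⟨m, hm⟩ | ⟨r, hr⟩
  · -- k even : ordinary cube, reduce to a cube in thueMorse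
    have hkm : k = 2*m := by omega
    have hc₁0 : c₁ = 0 := by
      have hpe : (i + i % 2) % 2 = 0 := by omega
      have := S1 (i + i % 2) (by omega) (by omega)
      rw [psi_even _ (by omega), psi_even _ hpe] at this
      have key : ∀ c : Fin 2, (1:Fin 2) = 1 + c → c = 0 := by decide
      exact key _ this
    have hc₂0 : c₂ = 0 := by
      have hpe : (i + k + i % 2) % 2 = 0 := by omega
      have := S2 (i + k + i % 2) (by omega) (by omega)
      rw [psi_even _ (by omega), psi_even _ hpe] at this
      have key : ∀ c : Fin 2, (1:Fin 2) = 1 + c → c = 0 := by decide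
      exact key _ this
    have T : ∀ p, i ≤ p → p < i + 2*k → psiThueMorse (p+k) = psiThueMorse p := by
      intro p hp1 hp2
      rcases lt_or_ge p (i+k) with h | h
      · rw [S1 p hp1 h, hc₁0, add_zero]
      · rw [S2 p h hp2, hc₂0, add_zero]
    apply noPeriod m (by omega) (i/2)
    intro t ht1 ht2
    have := T (2*t+1) (by omega) (by omega)
    rw [psi_odd _ (by omega), psi_odd _ (by omega),
      show (2*t+1+k)/2 = t + m by omega, show (2*t+1)/2 = t by omega] at this
    exact this.symm
  · -- k odd, k ≥ 3
    have hk3 : 3 ≤ k := by omega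
    have A : ∀ q, i ≤ q → q < i + k → q % 2 = 1 → psiThueMorse q = 1 + c₁ := by
      intro q hq1 hq2 hq3
      have := S1 q hq1 hq2
      rw [psi_even _ (by omega)] at this
      have key : ∀ x c : Fin 2, (1:Fin 2) = x + c → x = 1 + c := by decide
      exact key _ _ this
    have B : ∀ q, i + k ≤ q → q < i + 2*k → q % 2 = 1 → psiThueMorse q = 1 + c₁ := by
      intro q hq1 hq2 hq3
      have := S1 (q-k) (by omega) (by omega)
      rw [show q - k + k = q by omega, psi_even (q-k) (by omega)] at this
      exact this
    have B2 : ∀ q, i + k ≤ q → q < i + 2*k → q % 2 = 1 → psiThueMorse q = 1 + c₂ := by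
      intro q hq1 hq2 hq3
      have := S2 q hq1 hq2
      rw [psi_even _ (by omega)] at this
      have key : ∀ x c : Fin 2, (1:Fin 2) = x + c → x = 1 + c := by decide
      exact key _ _ this
    have C : ∀ q, i + 2*k ≤ q → q < i + 3*k → q % 2 = 1 → psiThueMorse q = 1 + c₂ := by
      intro q hq1 hq2 hq3
      have := S2 (q-k) (by omega) (by omega)
      rw [show q - k + k = q by omega, psi_even (q-k) (by omega)] at this
      exact this
    have hcc : c₁ = c₂ := by
      set q := i + k + (i + k + 1) % 2 with hqdef
      have hq3 : q % 2 = 1 := by omega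
      have hb := B q (by omega) (by omega) hq3
      have hb2 := B2 q (by omega) (by omega) hq3
      have key : ∀ c d : Fin 2, (1:Fin 2) + c = 1 + d → c = d := by decide
      exact key _ _ (hb.symm.trans hb2)
    have Full : ∀ q, i ≤ q → q < i + 3*k → q % 2 = 1 → psiThueMorse q = 1 + c₁ := by
      intro q hq1 hq2 hq3
      rcases lt_or_ge q (i+k) with h | h
      · exact A q hq1 h hq3
      · rcases lt_or_ge q (i+2*k) with h' | h'
        · exact B q h h' hq3
        · rw [C q h' hq2 hq3, hcc]
    set a := i/2 with ha
    have g0 := Full (2*a+1) (by omega) (by omega) (by omega)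
    have g1 := Full (2*a+3) (by omega) (by omega) (by omega)
    have g2 := Full (2*a+5) (by omega) (by omega) (by omega)
    rw [psi_odd _ (by omega), show (2*a+1)/2 = a by omega] at g0
    rw [psi_odd _ (by omega), show (2*a+3)/2 = a+1 by omega] at g1
    rw [psi_odd _ (by omega), show (2*a+5)/2 = a+2 by omega] at g2
    exact no3 a ⟨g0.trans g1.symm, g1.trans g2.symm⟩
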